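/- Let R and S be finite nonempty subsets of a commutative cancellative monoid with |R·S| ≤ |R|^{1+ε}. Then there exist s ∈ S and r' ∈ R such that for at least |S|·|R|^{−ε} elements s' ∈ S there exists r ∈ R with r·s = r'·s'. -/

import Mathlib

open Finset
open scoped Pointwise Classical

/-- If `R, S` are finite nonempty subsets of a commutative cancellative monoid
with `|R·S| ≤ |R|^(1+ε)`, then there exist `s ∈ S` and `r' ∈ R` such that for
at least `|S|·|R|^(−ε)` elements `s' ∈ S` there is `r ∈ R` with `r·s = r'·s'`. -/
theorem averaging_lemma {M : Type*} [CancelCommMonoid M] [DecidableEq M]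
    (R S : Finset M) (hR : R.Nonempty) (hS : S.Nonempty)
    (ε : ℝ) (hε : 0 ≤ ε) (h : ((R * S).card : ℝ) ≤ (R.card : ℝ) ^ ((1 : ℝ) + ε)) :
    ∃ s ∈ S, ∃ r' ∈ R,
      (S.card : ℝ) * (R.card : ℝ) ^ (-ε) ≤
        ((S.filter fun s' => ∃ r ∈ R, r * s = r' * s').card : ℝ) := by
  classical
  set P := R ×ˢ S with hP
  set Q := (P ×ˢ P).filter (fun q => q.1.1 * q.1.2 = q.2.1 * q.2.2) with hQ
  set f : M → ℕ := fun t => (P.filter (fun p => p.1 * p.2 = t)).card with hf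
  set N : M × M → ℕ :=
    fun p => (S.filter fun s' => ∃ r ∈ R, r * p.2 = p.1 * s').card with hN
  -- total count
  have hsum : ∑ t ∈ R * S, f t = R.card * S.card := by
    have key := Finset.card_eq_sum_card_fiberwise
      (s := P) (t := R * S) (f := fun p => p.1 * p.2) (fun p hp => by
        simp only [hP, Finset.mem_product] at hp
        exact Finset.mul_mem_mul (Finset.mem_product.mp hp).1 (Finset.mem_product.mp hp).2)
    rw [← key, hP, Finset.card_product]
  -- Q.card as sum of squares
  have hQ1 : Q.card = ∑ t ∈ R * S, f t * f t := by
    rw [Finset.card_eq_sum_card_fiberwise (f := fun q => q.1.1 * q.1.2)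
      (t := R * S) (fun q hq => by
        simp only [hQ, hP, Finset.mem_filter, Finset.mem_product] at hq
        have hq' := Finset.mem_filter.mp hq
        exact Finset.mul_mem_mul (Finset.mem_product.mp (Finset.mem_product.mp hq'.1).1).1
          (Finset.mem_product.mp (Finset.mem_product.mp hq'.1).1).2)]
    refine Finset.sum_congr rfl fun t _ => ?_
    rw [hf, ← Finset.card_product]
    congr 1
    ext q
    simp only [hQ, hP, Finset.mem_filter, Finset.mem_product]
    constructor
    · rintro ⟨⟨⟨h1, h2⟩, he⟩, ht⟩
      exact ⟨⟨h1, ht⟩, h2, he ▸ ht⟩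
    · rintro ⟨⟨h1, ht⟩, h2, ht'⟩
      exact ⟨⟨⟨h1, h2⟩, ht.trans ht'.symm⟩, ht⟩
  -- Q.card as sum of N
  have hQ2 : Q.card = ∑ p ∈ P, N p := by
    rw [Finset.card_eq_sum_card_fiberwise (f := fun q => (q.2.1, q.1.2))
      (t := P) (fun q hq => by
        simp only [hQ, hP, Finset.mem_filter, Finset.mem_product] at hq ⊢
        have hq' := Finset.mem_filter.mp hq
        exact Finset.mem_product.mpr ⟨(Finset.mem_product.mp (Finset.mem_product.mp hq'.1).2).1,
          (Finset.mem_product.mp (Finset.mem_product.mp hq'.1).1).2⟩)]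
    refine Finset.sum_congr rfl fun p hp => ?_
    rw [hN]
    refine Finset.card_bij (fun q _ => q.2.2) ?_ ?_ ?_
    · intro q hq
      rw [Finset.mem_filter] at hq
      obtain ⟨hqQ, hqp⟩ := hq
      rw [hQ, Finset.mem_filter, hP, Finset.mem_product, Finset.mem_product,
        Finset.mem_product] at hqQ
      obtain ⟨⟨⟨hq11, hq12⟩, hq21, hq22⟩, he⟩ := hqQ
      rw [Prod.ext_iff] at hqp
      rw [Finset.mem_filter]
      refine ⟨hq22, q.1.1, hq11, ?_⟩
      rw [← hqp.1, ← hqp.2]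
      exact he
    · rintro ⟨⟨a1, a2⟩, a3, a4⟩ ha ⟨⟨b1, b2⟩, b3, b4⟩ hb hv
      simp only at hv
      rw [Finset.mem_filter] at ha hb
      obtain ⟨haQ, hap⟩ := ha
      obtain ⟨hbQ, hbp⟩ := hb
      rw [hQ, Finset.mem_filter] at haQ hbQ
      have he1 : a1 * a2 = a3 * a4 := haQ.2
      have he2 : b1 * b2 = b3 * b4 := hbQ.2
      rw [Prod.ext_iff] at hap hbp
      simp only at hap hbp
      obtain ⟨ha3, ha2⟩ := hap
      obtain ⟨hb3, hb2⟩ := hbp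
      subst hv; subst ha3; subst ha2; subst hb3; subst hb2
      have hcanc : a1 * p.2 = b1 * p.2 := he1.trans he2.symm
      have := mul_right_cancel hcanc
      subst this
      rfl
    · intro s' hs'
      rw [Finset.mem_filter] at hs'
      obtain ⟨hs'S, r, hr, he⟩ := hs'
      rw [hP, Finset.mem_product] at hp
      refine ⟨((r, p.2), (p.1, s')), ?_, rfl⟩
      rw [Finset.mem_filter, hQ, Finset.mem_filter, hP, Finset.mem_product,
        Finset.mem_product, Finset.mem_product]
      exact ⟨⟨⟨⟨hr, hp.2⟩, hp.1, hs'S⟩, he⟩, rfl⟩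
  have hn1 : (1 : ℝ) ≤ (R.card : ℝ) := by exact_mod_cast hR.card_pos
  have hn0 : (0 : ℝ) < (R.card : ℝ) := by positivity
  have hm0 : (0 : ℝ) < (S.card : ℝ) := by exact_mod_cast hS.card_pos
  -- Cauchy-Schwarz
  have hQr : (Q.card : ℝ) = ∑ t ∈ R * S, ((f t : ℝ)) ^ 2 := by
    rw [hQ1]
    push_cast
    exact Finset.sum_congr rfl fun t _ => (sq ((f t : ℝ))).symm
  have hsr : ∑ t ∈ R * S, ((f t : ℝ)) = (R.card : ℝ) * (S.card : ℝ) := by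
    rw [← Nat.cast_sum, hsum]
    push_cast
    ring
  have hCS : ((R.card : ℝ) * (S.card : ℝ)) ^ 2 ≤ ((R * S).card : ℝ) * (Q.card : ℝ) := by
    rw [← hsr, hQr]
    exact sq_sum_le_card_mul_sum_sq
  -- lower bound on Q.card
  have hQ0 : (0 : ℝ) ≤ (Q.card : ℝ) := by positivity
  have hCS2 : ((R.card : ℝ) * (S.card : ℝ)) ^ 2 ≤ (R.card : ℝ) ^ ((1:ℝ) + ε) * (Q.card : ℝ) :=
    hCS.trans (mul_le_mul_of_nonneg_right h hQ0)
  have hpow : (0 : ℝ) < (R.card : ℝ) ^ ((1:ℝ) + ε) := Real.rpow_pos_of_pos hn0 _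
  have hQlb : (R.card : ℝ) ^ ((1:ℝ) - ε) * (S.card : ℝ) ^ 2 ≤ (Q.card : ℝ) := by
    rw [← mul_le_mul_iff_right₀ hpow]
    refine le_trans (le_of_eq ?_) hCS2
    rw [← mul_assoc, ← Real.rpow_add hn0]
    have : (1:ℝ) + ε + (1 - ε) = ((2:ℕ) : ℝ) := by push_cast; ring
    rw [this, Real.rpow_natCast]
    ring
  -- pigeonhole
  have hc : ∃ p ∈ P, (S.card : ℝ) * (R.card : ℝ) ^ (-ε) ≤ (N p : ℝ) := by
    apply Finset.exists_le_of_sum_le (hR.product hS)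
    have hPcard : (P.card : ℝ) = (R.card : ℝ) * (S.card : ℝ) := by
      rw [hP, Finset.card_product]; push_cast; ring
    rw [Finset.sum_const, nsmul_eq_mul, hPcard]
    calc (R.card : ℝ) * (S.card : ℝ) * ((S.card : ℝ) * (R.card : ℝ) ^ (-ε))
        = (R.card : ℝ) ^ ((1:ℝ) - ε) * (S.card : ℝ) ^ 2 := by
          rw [show ((1:ℝ) - ε) = 1 + (-ε) by ring, Real.rpow_add hn0, Real.rpow_one]
          ring
      _ ≤ (Q.card : ℝ) := hQlb
      _ = ∑ p ∈ P, ((N p : ℝ)) := by rw [hQ2]; push_cast; rfl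
  obtain ⟨p, hp, hle⟩ := hc
  rw [hP, Finset.mem_product] at hp
  exact ⟨p.2, hp.2, p.1, hp.1, hle⟩
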